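/- Let q = p^ℓ and let C_q = C^ℓ be the ℓ-fold iterated Cartier operator on rational differentials of a function field F of characteristic p. For any place P and any rational differential ω (with ω ≠ 0), v_P(C_q(ω)) ≥ ⌊v_P(ω)/q⌋, and this holds even when v_P(ω) is negative. -/
import Mathlib


private lemma my_ediv_ediv (a : ℤ) {b c : ℤ} (hb : 0 < b) (hc : 0 < c) :
    a / b / c = a / (b * c) := by
  have hbc : 0 < b * c := mul_pos hb hc
  apply le_antisymm
  · rw [Int.le_ediv_iff_mul_le hbc]
    have h1 : a / b / c * c ≤ a / b := (Int.le_ediv_iff_mul_le hc).mp le_rfl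
    have h2 : (a / b) * b ≤ a := (Int.le_ediv_iff_mul_le hb).mp le_rfl
    calc a / b / c * (b * c) = (a / b / c * c) * b := by ring
      _ ≤ (a / b) * b := by
          exact mul_le_mul_of_nonneg_right h1 hb.le
      _ ≤ a := h2
  · rw [Int.le_ediv_iff_mul_le hc, Int.le_ediv_iff_mul_le hb]
    have := (Int.le_ediv_iff_mul_le hbc).mp (le_rfl : a / (b*c) ≤ a / (b*c))
    calc a / (b*c) * c * b = a / (b*c) * (b*c) := by ring
      _ ≤ a := this

private lemma val_sum_exists {F ι : Type*} [Field F] (vF : F → ℤ)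
    (hvneg : ∀ a : F, a ≠ 0 → vF (-a) = vF a)
    (hv_add : ∀ a b : F, a ≠ 0 → b ≠ 0 → a + b ≠ 0 → min (vF a) (vF b) ≤ vF (a + b))
    (s : Finset ι) (f : ι → F)
    (hdist : ∀ i ∈ s, ∀ j ∈ s, f i ≠ 0 → f j ≠ 0 → vF (f i) = vF (f j) → i = j)
    (hne : ∃ i ∈ s, f i ≠ 0) :
    (∑ i ∈ s, f i) ≠ 0 ∧ ∃ j ∈ s, f j ≠ 0 ∧ vF (∑ i ∈ s, f i) = vF (f j) ∧
      ∀ i ∈ s, f i ≠ 0 → vF (f j) ≤ vF (f i) := by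
  classical
  -- strict triangle: if valuations differ, sum nonzero and valuation = min
  have hstrict : ∀ a b : F, a ≠ 0 → b ≠ 0 → vF a ≠ vF b →
      a + b ≠ 0 ∧ vF (a + b) = min (vF a) (vF b) := by
    have key : ∀ a b : F, a ≠ 0 → b ≠ 0 → vF a < vF b →
        a + b ≠ 0 ∧ vF (a + b) = vF a := by
      intro a b ha hb hab
      have hs : a + b ≠ 0 := by
        intro h
        have hba : b = -a := eq_neg_of_add_eq_zero_right h
        rw [hba, hvneg a ha] at hab; exact lt_irrefl _ hab
      refine ⟨hs, le_antisymm ?_ ?_⟩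
      · by_contra hlt
        push_neg at hlt
        have h1 : min (vF (a+b)) (vF (-b)) ≤ vF ((a+b) + (-b)) := by
          apply hv_add _ _ hs (neg_ne_zero.mpr hb)
          simpa using ha
        rw [add_neg_cancel_right, hvneg b hb] at h1
        have : vF a < min (vF (a+b)) (vF b) := lt_min hlt hab
        omega
      · have := hv_add a b ha hb hs
        omega
    intro a b ha hb hab
    rcases lt_or_gt_of_ne hab with h | h
    · obtain ⟨h1, h2⟩ := key a b ha hb h
      exact ⟨h1, by omega⟩
    · obtain ⟨h1, h2⟩ := key b a hb ha h
      rw [add_comm] at h1 h2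
      exact ⟨h1, by omega⟩
  induction s using Finset.induction_on with
  | empty => simp at hne
  | @insert a s ha ih =>
    by_cases hs : ∃ i ∈ s, f i ≠ 0
    · obtain ⟨hS, j, hjs, hj0, hSv, hmin⟩ := ih
        (fun i hi j hj => hdist i (Finset.mem_insert_of_mem hi) j (Finset.mem_insert_of_mem hj))
        hs
      by_cases hfa : f a = 0
      · rw [Finset.sum_insert ha, hfa, zero_add]
        refine ⟨hS, j, Finset.mem_insert_of_mem hjs, hj0, hSv, fun i hi hi0 => ?_⟩
        rcases Finset.mem_insert.mp hi with rfl | hi'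
        · exact absurd hfa hi0
        · exact hmin i hi' hi0
      · have haj : a ≠ j := fun h => ha (h ▸ hjs)
        have hane : vF (f a) ≠ vF (∑ i ∈ s, f i) := by
          rw [hSv]
          intro h
          exact haj (hdist a (Finset.mem_insert_self a s) j
            (Finset.mem_insert_of_mem hjs) hfa hj0 h)
        obtain ⟨h1, h2⟩ := hstrict (f a) (∑ i ∈ s, f i) hfa hS hane
        rw [Finset.sum_insert ha]
        refine ⟨h1, ?_⟩
        rcases le_total (vF (f a)) (vF (f j)) with hle | hle
        · refine ⟨a, Finset.mem_insert_self a s, hfa, ?_, ?_⟩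
          · rw [h2, hSv]; omega
          · intro i hi hi0
            rcases Finset.mem_insert.mp hi with rfl | hi'
            · exact le_rfl
            · exact le_trans hle (hmin i hi' hi0)
        · refine ⟨j, Finset.mem_insert_of_mem hjs, hj0, ?_, ?_⟩
          · rw [h2, hSv]; omega
          · intro i hi hi0
            rcases Finset.mem_insert.mp hi with rfl | hi'
            · exact hle
            · exact hmin i hi' hi0
    · push_neg at hs
      have hfa : f a ≠ 0 := by
        obtain ⟨i, hi, hi0⟩ := hne
        rcases Finset.mem_insert.mp hi with rfl | hi'
        · exact hi0
        · exact absurd (hs i hi') hi0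
      have hsum0 : ∑ i ∈ s, f i = 0 := Finset.sum_eq_zero hs
      rw [Finset.sum_insert ha, hsum0, add_zero]
      refine ⟨hfa, a, Finset.mem_insert_self a s, hfa, rfl, fun i hi hi0 => ?_⟩
      rcases Finset.mem_insert.mp hi with rfl | hi'
      · exact le_rfl
      · exact absurd (hs i hi') hi0


/-- For `q = p^ℓ` and the `ℓ`-fold iterated Cartier operator
`C_q = C^ℓ`, the valuation at any place `P` satisfies
`v_P(C_q(ω)) ≥ ⌊v_P(ω)/q⌋`, even when `v_P(ω)` is negative (the conclusion holds
trivially when `C_q(ω) = 0`, which has valuation `∞`). -/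
theorem iterated_cartier_valuation_floor_bound
    {p : ℕ} (hp : p.Prime)
    {F : Type*} [Field F] [CharP F p]
    {Ω : Type*} [AddCommGroup Ω] [Module F Ω]
    -- the universal derivation on rational differential forms
    (d : F → Ω)
    (hd_add : ∀ a b : F, d (a + b) = d a + d b)
    (hd_mul : ∀ a b : F, d (a * b) = a • d b + b • d a)
    -- `z` is a uniformizing parameter at the place `P` (hence a separating element)
    (z : F)
    -- `vF` is the discrete valuation of `F` at the place `P`
    (vF : F → ℤ)
    (hv_mul : ∀ a b : F, a ≠ 0 → b ≠ 0 → vF (a * b) = vF a + vF b)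
    (hv_add : ∀ a b : F, a ≠ 0 → b ≠ 0 → a + b ≠ 0 → min (vF a) (vF b) ≤ vF (a + b))
    (hz : vF z = 1)
    (hbasis : ∀ ω : Ω, ∃! g : F, ω = g • d z)
    (hdec : ∀ g : F, ∃ c : Fin p → F, g = ∑ i : Fin p, (c i) ^ p * z ^ (i : ℕ))
    -- `vΩ` is the valuation of differentials at `P`
    (vΩ : Ω → ℤ)
    (hvΩ : ∀ g : F, g ≠ 0 → vΩ (g • d z) = vF g)
    -- the Cartier operator
    (C : Ω → Ω)
    (hC : ∀ c : Fin p → F,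
      C ((∑ i : Fin p, (c i) ^ p * z ^ (i : ℕ)) • d z)
        = c ⟨p - 1, Nat.sub_lt hp.pos Nat.one_pos⟩ • d z)
    (ℓ : ℕ) (hℓ : 1 ≤ ℓ) :
    ∀ ω : Ω, ω ≠ 0 →
      (C^[ℓ] ω = 0 ∨ Int.fdiv (vΩ ω) ((p : ℤ) ^ ℓ) ≤ vΩ (C^[ℓ] ω)) := by

  classical
  -- basic facts about vF
  have v1 : vF 1 = 0 := by
    have h := hv_mul 1 1 one_ne_zero one_ne_zero
    rw [mul_one] at h; omega
  have hvneg : ∀ a : F, a ≠ 0 → vF (-a) = vF a := by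
    have hm1 : (-1 : F) ≠ 0 := neg_ne_zero.mpr one_ne_zero
    have h := hv_mul (-1) (-1) hm1 hm1
    rw [neg_mul_neg, one_mul, v1] at h
    intro a ha
    have h2 := hv_mul (-1) a hm1 ha
    rw [neg_one_mul] at h2
    omega
  have vpow : ∀ a : F, a ≠ 0 → ∀ n : ℕ, vF (a ^ n) = n * vF a := by
    intro a ha n
    induction n with
    | zero => simpa using v1
    | succ n ih =>
      rw [pow_succ, hv_mul _ _ (pow_ne_zero n ha) ha, ih]
      push_cast; ring
  -- d 0 = 0, z ≠ 0
  have hd0 : d 0 = 0 := by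
    have h := hd_add 0 0
    rw [add_zero] at h
    exact (left_eq_add.mp h)
  have hdz : d z ≠ 0 := by
    intro h
    obtain ⟨g, hg, hu⟩ := hbasis 0
    have h1 : (1 : F) = g := hu 1 (by simp [h])
    have h0 : (0 : F) = g := hu 0 (by simp [h])
    exact one_ne_zero (h1.trans h0.symm)
  have hz0 : z ≠ 0 := by
    intro h; apply hdz; rw [h]; exact hd0
  have hppos : (0 : ℤ) < (p : ℤ) := by exact_mod_cast hp.pos
  -- C 0 = 0
  have hC0 : C (0 : Ω) = 0 := by
    have h := hC (fun _ => 0)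
    have hz' : (∑ i : Fin p, (0 : F) ^ p * z ^ (i : ℕ)) = 0 := by
      apply Finset.sum_eq_zero
      intro i _
      rw [zero_pow hp.ne_zero, zero_mul]
    simp only [hz', zero_smul] at h
    exact h
  -- the single-step bound
  have hstep : ∀ ω : Ω, ω ≠ 0 → (C ω = 0 ∨ Int.fdiv (vΩ ω) (p : ℤ) ≤ vΩ (C ω)) := by
    intro ω hω
    obtain ⟨g, hg, -⟩ := hbasis ω
    have hg0 : g ≠ 0 := by rintro rfl; rw [zero_smul] at hg; exact hω hg
    obtain ⟨c, hcg⟩ := hdec g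
    set pm1 : Fin p := ⟨p - 1, Nat.sub_lt hp.pos Nat.one_pos⟩ with hpm1
    have hCω : C ω = c pm1 • d z := by rw [hg, hcg]; exact hC c
    by_cases hcp : c pm1 = 0
    · left; rw [hCω, hcp, zero_smul]
    · right
      set t : Fin p → F := fun i => (c i) ^ p * z ^ (i : ℕ) with ht
      have ht0 : ∀ i : Fin p, t i ≠ 0 ↔ c i ≠ 0 := by
        intro i
        simp only [ht, mul_ne_zero_iff, pow_ne_zero_iff hp.ne_zero]
        exact ⟨fun h => h.1, fun h => ⟨h, pow_ne_zero _ hz0⟩⟩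
      have hterm : ∀ i : Fin p, c i ≠ 0 → vF (t i) = p * vF (c i) + (i : ℕ) := by
        intro i hci
        simp only [ht]
        rw [hv_mul _ _ (pow_ne_zero _ hci) (pow_ne_zero _ hz0),
          vpow _ hci, vpow _ hz0, hz]
        ring
      have hdist : ∀ i ∈ (Finset.univ : Finset (Fin p)), ∀ j ∈ Finset.univ,
          t i ≠ 0 → t j ≠ 0 → vF (t i) = vF (t j) → i = j := by
        intro i _ j _ hi hj hij
        have hci := (ht0 i).mp hi
        have hcj := (ht0 j).mp hj
        rw [hterm i hci, hterm j hcj] at hij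
        have hdvd : (p : ℤ) ∣ ((j : ℕ) : ℤ) - ((i : ℕ) : ℤ) :=
          ⟨vF (c i) - vF (c j), by linarith⟩
        have hlt : |((j : ℕ) : ℤ) - ((i : ℕ) : ℤ)| < (p : ℤ) := by
          have hi' : ((i : ℕ) : ℤ) < p := by exact_mod_cast i.isLt
          have hj' : ((j : ℕ) : ℤ) < p := by exact_mod_cast j.isLt
          have hi0 : (0 : ℤ) ≤ ((i : ℕ) : ℤ) := Int.ofNat_nonneg _
          have hj0 : (0 : ℤ) ≤ ((j : ℕ) : ℤ) := Int.ofNat_nonneg _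
          rw [abs_sub_lt_iff]; omega
        have := Int.eq_zero_of_abs_lt_dvd hdvd hlt
        have : ((j : ℕ) : ℤ) = ((i : ℕ) : ℤ) := by omega
        have : (j : ℕ) = (i : ℕ) := by exact_mod_cast this
        exact (Fin.ext this).symm
      have hne : ∃ i ∈ (Finset.univ : Finset (Fin p)), t i ≠ 0 :=
        ⟨pm1, Finset.mem_univ _, (ht0 pm1).mpr hcp⟩
      obtain ⟨-, j, -, hj0, hgv, hmin⟩ :=
        val_sum_exists vF hvneg hv_add Finset.univ t hdist hne
      have hgsum : vF g = vF (∑ i : Fin p, t i) := by rw [hcg]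
      have hle : vF g ≤ p * vF (c pm1) + (p - 1 : ℕ) := by
        have h1 : vF g ≤ vF (t pm1) := by
          rw [hgsum, hgv]; exact hmin pm1 (Finset.mem_univ _) ((ht0 pm1).mpr hcp)
        rw [hterm pm1 hcp] at h1
        exact h1
      have hvω : vΩ ω = vF g := by rw [hg]; exact hvΩ g hg0
      have hvCω : vΩ (C ω) = vF (c pm1) := by rw [hCω]; exact hvΩ _ hcp
      rw [hvω, hvCω]
      rw [Int.fdiv_eq_ediv_of_nonneg _ hppos.le]
      have h2 : vF g / (p : ℤ) ≤ (p * vF (c pm1) + ((p - 1 : ℕ) : ℤ)) / (p : ℤ) :=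
        Int.ediv_le_ediv hppos hle
      have h3 : (p * vF (c pm1) + ((p - 1 : ℕ) : ℤ)) / (p : ℤ) = vF (c pm1) := by
        rw [add_comm, Int.add_mul_ediv_left _ _ hppos.ne',
          Int.ediv_eq_zero_of_lt (by positivity) (by
            have : 1 ≤ p := hp.one_lt.le
            push_cast [Nat.cast_sub this]
            omega), zero_add]
      omega
  -- iterate
  intro ω hω
  have key : ∀ n : ℕ, C^[n] ω = 0 ∨ Int.fdiv (vΩ ω) ((p : ℤ) ^ n) ≤ vΩ (C^[n] ω) := by
    intro n
    induction n with
    | zero =>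
      right
      simp [Int.fdiv_one]
    | succ n ih =>
      rw [Function.iterate_succ_apply']
      rcases ih with h0 | hle
      · left; rw [h0]; exact hC0
      · by_cases h0 : C^[n] ω = 0
        · left; rw [h0]; exact hC0
        · rcases hstep _ h0 with h | h
          · left; exact h
          · right
            have hpn : (0 : ℤ) < (p : ℤ) ^ n := pow_pos hppos n
            calc Int.fdiv (vΩ ω) ((p : ℤ) ^ (n + 1))
                = Int.fdiv (Int.fdiv (vΩ ω) ((p : ℤ) ^ n)) (p : ℤ) := by
                  rw [Int.fdiv_eq_ediv_of_nonneg _ hpn.le, Int.fdiv_eq_ediv_of_nonneg _ hppos.le,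
                    Int.fdiv_eq_ediv_of_nonneg _ (pow_pos hppos (n+1)).le,
                    my_ediv_ediv _ hpn hppos, pow_succ]
              _ ≤ Int.fdiv (vΩ (C^[n] ω)) (p : ℤ) := by
                  rw [Int.fdiv_eq_ediv_of_nonneg _ hppos.le, Int.fdiv_eq_ediv_of_nonneg _ hppos.le]
                  exact Int.ediv_le_ediv hppos hle
              _ ≤ vΩ (C (C^[n] ω)) := h
  exact key ℓ
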